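/- Fix an integer n > 1 and let Γ be a finite simplicial graph satisfying: (1) there is an induced subgraph B ⊂ Γ such that V(Γ) ∖ V(B) consists of exactly two vertices u and v; (2) B has hypergraph index n − 1; (3) Link(u) is a pair of non-adjacent vertices of B, and Link(v) is a pair of non-adjacent vertices of B; (4) for every vertex s ∈ Γ − Star(u), the pair (u,s) is a rank n pair, and for every s ∈ Γ − Star(v), the pair (v,s) is a rank n pair. Then Γ has hypergraph index exactly n. -/

import Mathlib

open Relation

variable {V : Type*}

/-- Relators of the right-angled Coxeter group of a simplicial graph. -/
def racgRels (G : SimpleGraph V) : Set (FreeGroup V) :=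
  {r | (∃ v, r = FreeGroup.of v * FreeGroup.of v) ∨
       (∃ v w, G.Adj v w ∧
          r = FreeGroup.of v * FreeGroup.of w * FreeGroup.of v * FreeGroup.of w)}

/-- The right-angled Coxeter group `W_Γ` of a simplicial graph `Γ`. -/
abbrev RACG (G : SimpleGraph V) := PresentedGroup (racgRels G)

/-- The generator of `W_Γ` corresponding to a vertex. -/
def racgGen (G : SimpleGraph V) (v : V) : RACG G := PresentedGroup.of v

/-- Word length with respect to the vertex generators. -/
noncomputable def wordLength (G : SimpleGraph V) (g : RACG G) : ℕ :=
  sInf {n | ∃ l : List V, l.length = n ∧ (l.map (racgGen G)).prod = g}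

/-- Word metric on `W_Γ`. -/
noncomputable def wdist (G : SimpleGraph V) (g h : RACG G) : ℕ :=
  wordLength G (g⁻¹ * h)

/-- The special subgroup `W_T` generated by a subset `T` of the vertices. -/
def specialSubgroup (G : SimpleGraph V) (T : Set V) : Subgroup (RACG G) :=
  Subgroup.closure (racgGen G '' T)

/-- The left coset `g W_T` as a subset of `W_Γ`. -/
def leftCosetOf (G : SimpleGraph V) (g : RACG G) (T : Set V) : Set (RACG G) :=
  (g * ·) '' (specialSubgroup G T : Set (RACG G))

/-- The `C`-neighborhood of a subset in the word metric. -/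
noncomputable def nbhd (G : SimpleGraph V) (C : ℕ) (A : Set (RACG G)) : Set (RACG G) :=
  {x | ∃ a ∈ A, wdist G x a ≤ C}

/-- A subset of `W_Γ` has infinite diameter. -/
def InfDiam (G : SimpleGraph V) (A : Set (RACG G)) : Prop :=
  ∀ D : ℕ, ∃ x ∈ A, ∃ y ∈ A, D ≤ wdist G x y

/-- Two subsets are `C`-Hausdorff close. -/
def HausCloseWith (G : SimpleGraph V) (C : ℕ) (A B : Set (RACG G)) : Prop :=
  A ⊆ nbhd G C B ∧ B ⊆ nbhd G C A

/-- Two subsets are Hausdorff close. -/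
def HausClose (G : SimpleGraph V) (A B : Set (RACG G)) : Prop :=
  ∃ C : ℕ, HausCloseWith G C A B

/-- A pair of distinct non-adjacent vertices. -/
def NonAdjPair (G : SimpleGraph V) (s t : V) : Prop := s ≠ t ∧ ¬ G.Adj s t

/-- A set of vertices containing a pair of non-adjacent vertices. -/
def HasNonAdjPair (G : SimpleGraph V) (A : Set V) : Prop :=
  ∃ s ∈ A, ∃ t ∈ A, NonAdjPair G s t

/-- `L` is the join `A ⋆ B` (on the level of vertex sets of induced subgraphs). -/
def JoinDecomp (G : SimpleGraph V) (L A B : Set V) : Prop :=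
  A ∪ B = L ∧ ∀ a ∈ A, ∀ b ∈ B, G.Adj a b

/-- `L` is a join of two induced subgraphs, each containing a pair of
non-adjacent vertices. -/
def IsWidePre (G : SimpleGraph V) (L : Set V) : Prop :=
  ∃ A B : Set V, JoinDecomp G L A B ∧ HasNonAdjPair G A ∧ HasNonAdjPair G B

/-- The wide subgraphs `Ω(Γ)`: maximal joins of two induced subgraphs each
containing a pair of non-adjacent vertices. -/
def IsWide (G : SimpleGraph V) (L : Set V) : Prop :=
  IsWidePre G L ∧ ∀ L', IsWidePre G L' → L ⊆ L' → L = L'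

/-- `L = A ⋆ K` with `A` a pair of non-adjacent vertices and `K` a nonempty clique. -/
def IsStripDecomp (G : SimpleGraph V) (L A K : Set V) : Prop :=
  (∃ s t, NonAdjPair G s t ∧ A = {s, t}) ∧ K.Nonempty ∧ G.IsClique K ∧
    A ∪ K = L ∧ ∀ a ∈ A, ∀ k ∈ K, G.Adj a k

def IsStripPre (G : SimpleGraph V) (L : Set V) : Prop :=
  ∃ A K : Set V, IsStripDecomp G L A K

/-- The strip subgraphs `Ψ(Γ)`: subgraphs of the form `A ⋆ K` as above that are
not properly contained in any wide subgraph nor in any other such subgraph. -/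
def IsStrip (G : SimpleGraph V) (L : Set V) : Prop :=
  IsStripPre G L ∧ (∀ L', IsWide G L' → L ⊆ L' → L = L') ∧
    (∀ L', IsStripPre G L' → L ⊆ L' → L = L')

/-- Two hyperedges of a hypergraph intersect in a pair of non-adjacent vertices. -/
def hypStep (G : SimpleGraph V) (E : Set (Set V)) (H H' : Set V) : Prop :=
  H ∈ E ∧ H' ∈ E ∧ ∃ s t, NonAdjPair G s t ∧ s ∈ H ∩ H' ∧ t ∈ H ∩ H'

/-- The hyperedge sets of the lambda hypergraphs `Λ_i(Γ)`. -/
def Lam (G : SimpleGraph V) : ℕ → Set (Set V)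
  | 0 => {L | IsWide G L ∨ IsStrip G L}
  | (i+1) =>
      {Z | ∃ H ∈ Lam G i,
        Z = ⋃₀ {H' | H' ∈ Lam G i ∧ ReflTransGen (hypStep G (Lam G i)) H H'}}

/-- A hyperedge `H` of `Λ_i(Γ)` is a member of the hyperedge of `Λ_{i+1}(Γ)`
formed as the union of its `≡_i`-equivalence class. -/
def memberOf (G : SimpleGraph V) (i : ℕ) (H Z : Set V) : Prop :=
  H ∈ Lam G i ∧
    Z = ⋃₀ {H' | H' ∈ Lam G i ∧ ReflTransGen (hypStep G (Lam G i)) H H'}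

/-- `Γ` has hypergraph index exactly `h ∈ ℕ`. -/
def HasHypIndex (G : SimpleGraph V) (h : ℕ) : Prop :=
  (∃ L, IsWide G L) ∧ (∃ H ∈ Lam G h, Set.univ ⊆ H) ∧
    ∀ h' < h, ¬ ∃ H ∈ Lam G h', Set.univ ⊆ H

/-- The hypergraph index of `Γ` as an element of `ℕ ∪ {∞}`. -/
noncomputable def hypIndex (G : SimpleGraph V) : ℕ∞ :=
  sInf {x : ℕ∞ | ∃ m : ℕ, x = (m : ℕ∞) ∧ (∃ L, IsWide G L) ∧
          ∃ H ∈ Lam G m, Set.univ ⊆ H}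

/-- The realization `R_i(Γ)`: cosets `g W_H` for `H` a hyperedge of `Λ_i(Γ)`
whose induced subgraph is not a strip subgraph. -/
def realization (G : SimpleGraph V) (i : ℕ) : Set (Set (RACG G)) :=
  {L | ∃ (g : RACG G) (H : Set V), H ∈ Lam G i ∧ ¬ IsStrip G H ∧
        L = leftCosetOf G g H}

/-- A coset `g W_H` (with `H ∈ Λ_i`) is a member of `g' W_{H'}` (with
`H' ∈ Λ_{i+1}`). -/
def cosetMemberOf (G : SimpleGraph V) (i : ℕ) (L L' : Set (RACG G)) : Prop :=
  ∃ (g g' : RACG G) (H H' : Set V),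
    memberOf G i H H' ∧ L = leftCosetOf G g H ∧ L' = leftCosetOf G g' H' ∧ L ⊆ L'

/-- The maximal size of a clique of `Γ`. -/
noncomputable def maxCliqueSize (G : SimpleGraph V) : ℕ :=
  sSup {n : ℕ | ∃ K : Set V, G.IsClique K ∧ K.ncard = n}

/-- A combinatorial path in the Cayley graph of `W_Γ`. -/
def IsEdgePath (G : SimpleGraph V) (p : ℕ → RACG G) (n : ℕ) : Prop :=
  ∀ k < n, wdist G (p k) (p (k+1)) ≤ 1

/-- `Y` is `C`-path connected: any two points of `Y` are joined by a path in the
Cayley graph staying in the `C`-neighborhood of `Y`. -/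
def CPathConn (G : SimpleGraph V) (C : ℕ) (Y : Set (RACG G)) : Prop :=
  ∀ y₁ ∈ Y, ∀ y₂ ∈ Y, ∃ (n : ℕ) (p : ℕ → RACG G),
    p 0 = y₁ ∧ p n = y₂ ∧ IsEdgePath G p n ∧ ∀ k ≤ n, p k ∈ nbhd G C Y

/-- The coarse intersection degree of a collection `M` of subsets of `W_Γ` is at
most `d`. -/
def CoarseIntDegLE (G : SimpleGraph V) (M : Set (Set (RACG G))) (d : ℕ) : Prop :=
  ∃ (Ms : ℕ → Set (Set (RACG G))) (P : ℕ → Set (RACG G) → Set (Set (RACG G)))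
    (C : ℕ), 0 < C ∧ Ms 0 = M ∧
    (∀ i, 1 ≤ i → i ≤ d → ∀ A ∈ Ms i,
      (P i A ⊆ Ms (i-1)) ∧
      (A ⊆ ⋃ B ∈ P i A, nbhd G C B) ∧
      ((⋃ B ∈ P i A, B) ⊆ A) ∧
      (∀ A₁ ∈ P i A, ∀ A₂ ∈ P i A, ∃ (n : ℕ) (ch : ℕ → Set (RACG G)),
        ch 0 = A₁ ∧ ch n = A₂ ∧ (∀ k ≤ n, ch k ∈ P i A) ∧
        (∀ k < n, InfDiam G (nbhd G C (ch k) ∩ ch (k+1)) ∧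
          CPathConn G C (nbhd G C (ch k) ∩ ch (k+1))))) ∧
    (∃ A ∈ Ms d, ∀ B ∈ M, B ⊆ nbhd G C A)

/-- The coarse intersection degree of `M` is exactly `d`. -/
def CoarseIntDeg (G : SimpleGraph V) (M : Set (Set (RACG G))) (d : ℕ) : Prop :=
  CoarseIntDegLE G M d ∧ ∀ d' < d, ¬ CoarseIntDegLE G M d'

/-- A `(K, C)`-quasi-isometry between two right-angled Coxeter groups with
their word metrics. -/
def IsQI {V' : Type*} (G : SimpleGraph V) (G' : SimpleGraph V') (K C : ℝ)
    (f : RACG G → RACG G') : Prop :=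
  (∀ a b : RACG G,
      (1/K) * (wdist G a b : ℝ) - C ≤ (wdist G' (f a) (f b) : ℝ) ∧
      (wdist G' (f a) (f b) : ℝ) ≤ K * (wdist G a b : ℝ) + C) ∧
  (∀ y : RACG G', ∃ x : RACG G, (wdist G' y (f x) : ℝ) ≤ C)

/-- `Q` is the vertex set of an induced `4`-cycle of `Γ`. -/
def IsInducedSquare (G : SimpleGraph V) (Q : Set V) : Prop :=
  ∃ a b c d : V, Q = {a, b, c, d} ∧
    G.Adj a b ∧ G.Adj b c ∧ G.Adj c d ∧ G.Adj d a ∧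
    a ≠ c ∧ b ≠ d ∧ ¬ G.Adj a c ∧ ¬ G.Adj b d

/-- Adjacency in the square graph of `Γ`. -/
def sqAdj (G : SimpleGraph V) (Q Q' : Set V) : Prop :=
  IsInducedSquare G Q ∧ IsInducedSquare G Q' ∧ Q ≠ Q' ∧
    ∃ s t, NonAdjPair G s t ∧ s ∈ Q ∩ Q' ∧ t ∈ Q ∩ Q'

/-- `Γ` is a CFS graph. -/
def IsCFS (G : SimpleGraph V) : Prop :=
  ∃ Om K : Set V, Om ∪ K = Set.univ ∧ G.IsClique K ∧
    (∀ o ∈ Om, ∀ k ∈ K, G.Adj o k) ∧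
    ∃ Q₀, IsInducedSquare G Q₀ ∧
      ⋃₀ {Q | IsInducedSquare G Q ∧ ReflTransGen (sqAdj G) Q₀ Q} = Om

/-- Rank `n` pairs of non-adjacent vertices. -/
def IsRankPair (G : SimpleGraph V) : ℕ → V → V → Prop
  | 0, _, _ => False
  | 1, s, t => NonAdjPair G s t ∧ ¬ ∃ Q, IsInducedSquare G Q ∧ s ∈ Q ∧ t ∈ Q
  | (n+2), s, t => NonAdjPair G s t ∧
      ((∀ s₁ ∈ G.neighborSet s, ∀ s₂ ∈ G.neighborSet s,
          NonAdjPair G s₁ s₂ → IsRankPair G (n+1) s₁ s₂) ∨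
       (∀ t₁ ∈ G.neighborSet t, ∀ t₂ ∈ G.neighborSet t,
          NonAdjPair G t₁ t₂ → IsRankPair G (n+1) t₁ t₂))

/-- The hypergraph index spectrum of `W_Γ`. -/
noncomputable def hypSpectrum (G : SimpleGraph V) : Set ℕ∞ :=
  {x | ∃ T : Set V,
        (hypIndex (G.induce T) ≠ ⊤ ∧
          ∀ T' : Set V, hypIndex (G.induce T') ≠ ⊤ → T ⊆ T' → T = T') ∧
        hypIndex (G.induce T) = x}

section Aux

variable {V : Type*} (G : SimpleGraph V)

/-- The "box" of a pair: the pair plus common neighbors. -/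
def rkBox (x y : V) : Set V := {x, y} ∪ (G.neighborSet x ∩ G.neighborSet y)

variable {G}

lemma nonAdjPair_symm {x y : V} (h : NonAdjPair G x y) : NonAdjPair G y x :=
  ⟨h.1.symm, fun a => h.2 a.symm⟩

lemma rkBox_comm (x y : V) : rkBox G x y = rkBox G y x := by
  unfold rkBox
  rw [Set.pair_comm, Set.inter_comm]

lemma isRankPair_nonAdj : ∀ {k : ℕ} {x y : V}, IsRankPair G k x y → NonAdjPair G x y
  | 0, _, _, h => h.elim
  | 1, _, _, h => h.1
  | (_+2), _, _, h => h.1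

/-- Lemma D: a rank pair has no pair of non-adjacent common neighbors. -/
lemma rank_common_clique : ∀ (k : ℕ) {x y z z' : V}, IsRankPair G k x y →
    G.Adj x z → G.Adj y z → G.Adj x z' → G.Adj y z' → NonAdjPair G z z' → False
  | 0, _, _, _, _, h, _, _, _, _, _ => h.elim
  | 1, x, y, z, z', h, hxz, hyz, hxz', hyz', hzz' => by
      refine h.2 ⟨{x, z, y, z'}, ⟨x, z, y, z', rfl, hxz, hyz.symm, hyz', hxz'.symm,
        h.1.1, hzz'.1, h.1.2, hzz'.2⟩, by simp, by simp⟩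
  | (m+2), x, y, z, z', h, hxz, hyz, hxz', hyz', hzz' => by
      rcases h.2 with hc | hc
      · exact rank_common_clique (m+1) (hc z hxz z' hxz' hzz')
          hxz.symm hxz'.symm hyz.symm hyz'.symm h.1
      · exact rank_common_clique (m+1) (hc z hyz z' hyz' hzz')
          hxz.symm hxz'.symm hyz.symm hyz'.symm h.1

/-- A rank pair is not contained in a wide-pre subgraph. -/
lemma rank_not_mem_widePre {k : ℕ} {x y : V} {L : Set V} (hr : IsRankPair G k x y)
    (hL : IsWidePre G L) (hx : x ∈ L) (hy : y ∈ L) : False := by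
  obtain ⟨A, C, ⟨hun, hadj⟩, ⟨a, ha, a', ha', hpa⟩, ⟨c, hc, c', hc', hpc⟩⟩ := hL
  have hnxy := isRankPair_nonAdj hr
  have hx' : x ∈ A ∪ C := hun ▸ hx
  have hy' : y ∈ A ∪ C := hun ▸ hy
  rcases hx' with hxA | hxC <;> rcases hy' with hyA | hyC
  · exact rank_common_clique k hr (hadj x hxA c hc) (hadj y hyA c hc)
      (hadj x hxA c' hc') (hadj y hyA c' hc') hpc
  · exact hnxy.2 (hadj x hxA y hyC)
  · exact hnxy.2 (hadj y hyA x hxC).symm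
  · exact rank_common_clique k hr (hadj a ha x hxC).symm (hadj a ha y hyC).symm
      (hadj a' ha' x hxC).symm (hadj a' ha' y hyC).symm hpa

/-- A strip-pre subgraph containing a non-adjacent pair lies in the box of the pair. -/
lemma stripPre_subset_rkBox {x y : V} {L : Set V} (hL : IsStripPre G L)
    (hx : x ∈ L) (hy : y ∈ L) (hnxy : NonAdjPair G x y) : L ⊆ rkBox G x y := by
  obtain ⟨A, K, ⟨s, t, hst, hA⟩, hKne, hKcl, hun, hadj⟩ := hL
  subst hA
  -- x and y must both lie in {s,t}
  have hmem : ∀ w ∈ L, w = s ∨ w = t ∨ w ∈ K := by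
    intro w hw
    have : w ∈ ({s, t} : Set V) ∪ K := hun ▸ hw
    rcases this with h | h
    · rcases h with h | h
      · exact Or.inl h
      · exact Or.inr (Or.inl h)
    · exact Or.inr (Or.inr h)
  have key : (x = s ∧ y = t) ∨ (x = t ∧ y = s) := by
    rcases hmem x hx with hxs | hxt | hxK <;> rcases hmem y hy with hys | hyt | hyK
    · exact absurd (hxs.trans hys.symm) hnxy.1
    · exact Or.inl ⟨hxs, hyt⟩
    · exact absurd (hxs ▸ hadj s (by simp) y hyK) hnxy.2
    · exact Or.inr ⟨hxt, hys⟩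
    · exact absurd (hxt.trans hyt.symm) hnxy.1
    · exact absurd (hxt ▸ hadj t (by simp) y hyK) hnxy.2
    · exact absurd (hys ▸ (hadj s (by simp) x hxK).symm) hnxy.2
    · exact absurd (hyt ▸ (hadj t (by simp) x hxK).symm) hnxy.2
    · rcases hKcl hxK hyK hnxy.1 with h
      exact absurd h hnxy.2
  intro w hw
  rcases hmem w hw with h | h | hK
  · rcases key with ⟨h1, h2⟩ | ⟨h1, h2⟩
    · exact Or.inl (Or.inl (h.trans h1.symm))
    · exact Or.inl (Or.inr (h.trans h2.symm))
  · rcases key with ⟨h1, h2⟩ | ⟨h1, h2⟩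
    · exact Or.inl (Or.inr (h.trans h2.symm))
    · exact Or.inl (Or.inl (h.trans h1.symm))
  · have hws : G.Adj s w := hadj s (by simp) w hK
    have hwt : G.Adj t w := hadj t (by simp) w hK
    rcases key with ⟨h1, h2⟩ | ⟨h1, h2⟩
    · exact Or.inr ⟨h1 ▸ hws, h2 ▸ hwt⟩
    · exact Or.inr ⟨h1 ▸ hwt, h2 ▸ hws⟩

lemma lam_zero_cases {L : Set V} (h : L ∈ Lam G 0) : IsWidePre G L ∨ IsStripPre G L := by
  rcases h with h | h
  · exact Or.inl h.1
  · exact Or.inr h.1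

end Aux
section Aux2

variable {V : Type*} {G : SimpleGraph V}

lemma hypStep_symm {E : Set (Set V)} {H H' : Set V} (h : hypStep G E H H') :
    hypStep G E H' H := by
  obtain ⟨h1, h2, s, t, hst, hs, ht⟩ := h
  exact ⟨h2, h1, s, t, hst, ⟨hs.2, hs.1⟩, ⟨ht.2, ht.1⟩⟩

/-- The canonical element of `Lam G (i+1)` generated by `H ∈ Lam G i`. -/
lemma lam_succ_of_mem {i : ℕ} {H : Set V} (h : H ∈ Lam G i) :
    (⋃₀ {H' | H' ∈ Lam G i ∧ ReflTransGen (hypStep G (Lam G i)) H H'}) ∈ Lam G (i+1) :=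
  ⟨H, h, rfl⟩

lemma subset_lam_succ {i : ℕ} {H H' : Set V} (h : H ∈ Lam G i) (h' : H' ∈ Lam G i)
    (hr : ReflTransGen (hypStep G (Lam G i)) H H') :
    H' ⊆ ⋃₀ {H'' | H'' ∈ Lam G i ∧ ReflTransGen (hypStep G (Lam G i)) H H''} :=
  fun x hx => ⟨H', ⟨h', hr⟩, hx⟩

lemma exists_lam_succ_superset {i : ℕ} {H : Set V} (h : H ∈ Lam G i) :
    ∃ Z ∈ Lam G (i+1), H ⊆ Z :=
  ⟨_, lam_succ_of_mem h, subset_lam_succ h h ReflTransGen.refl⟩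

lemma exists_lam_le_superset {i j : ℕ} (hij : i ≤ j) {H : Set V} (h : H ∈ Lam G i) :
    ∃ Z ∈ Lam G j, H ⊆ Z := by
  induction j with
  | zero => exact ⟨H, by simpa [Nat.le_zero.mp hij] using h, subset_rfl⟩
  | succ j ih =>
    rcases Nat.lt_or_ge i (j+1) with hlt | hge
    · obtain ⟨Z, hZ, hsub⟩ := ih (Nat.lt_succ_iff.mp hlt)
      obtain ⟨Z', hZ', hsub'⟩ := exists_lam_succ_superset hZ
      exact ⟨Z', hZ', hsub.trans hsub'⟩
    · have : i = j + 1 := le_antisymm hij hge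
      exact ⟨H, this ▸ h, subset_rfl⟩

lemma nonadj_pair_of_mem_lam : ∀ (i : ℕ) (H : Set V), H ∈ Lam G i →
    ∃ s ∈ H, ∃ t ∈ H, NonAdjPair G s t := by
  intro i
  induction i with
  | zero =>
    intro H h
    rcases lam_zero_cases h with h | h
    · obtain ⟨A, C, ⟨hun, _⟩, ⟨a, ha, a', ha', hp⟩, _⟩ := h
      exact ⟨a, hun ▸ Or.inl ha, a', hun ▸ Or.inl ha', hp⟩
    · obtain ⟨A, K, ⟨s, t, hst, hA⟩, _, _, hun, _⟩ := h
      exact ⟨s, hun ▸ Or.inl (hA ▸ (by simp)), t, hun ▸ Or.inl (hA ▸ (by simp)), hst⟩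
  | succ i ih =>
    rintro H ⟨H₀, h₀, rfl⟩
    obtain ⟨s, hs, t, ht, hp⟩ := ih H₀ h₀
    have hsub := subset_lam_succ h₀ h₀ ReflTransGen.refl
    exact ⟨s, hsub hs, t, hsub ht, hp⟩

/-- Key propagation: if every hyperedge of level `i` containing the pair `{p,q}`
lies in its box, and the common neighborhood is a clique, then the pair membership
propagates through the whole equivalence class. -/
lemma pair_propagates {i : ℕ} {p q : V} (hpq : NonAdjPair G p q)
    (hclique : ∀ z z', z ∈ G.neighborSet p ∩ G.neighborSet q →
      z' ∈ G.neighborSet p ∩ G.neighborSet q → NonAdjPair G z z' → False)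
    (hprop : ∀ H' ∈ Lam G i, p ∈ H' → q ∈ H' → H' ⊆ rkBox G p q)
    {H₁ H₂ : Set V} (hstep : hypStep G (Lam G i) H₁ H₂)
    (h1 : p ∈ H₁ ∧ q ∈ H₁) : p ∈ H₂ ∧ q ∈ H₂ := by
  obtain ⟨hH₁, hH₂, a, b, hab, ha, hb⟩ := hstep
  have hsub := hprop H₁ hH₁ h1.1 h1.2
  have haB : a ∈ rkBox G p q := hsub ha.1
  have hbB : b ∈ rkBox G p q := hsub hb.1
  have key : (a = p ∧ b = q) ∨ (a = q ∧ b = p) := by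
    have hon : ∀ {c : V}, c ∈ rkBox G p q → c = p ∨ c = q ∨ (G.Adj p c ∧ G.Adj q c) := by
      rintro c hc
      rcases hc with (h | h) | h
      · exact Or.inl h
      · exact Or.inr (Or.inl h)
      · exact Or.inr (Or.inr ⟨h.1, h.2⟩)
    rcases hon haB with h1 | h1 | h1 <;> rcases hon hbB with h2 | h2 | h2
    · exact absurd (h1.trans h2.symm) hab.1
    · exact Or.inl ⟨h1, h2⟩
    · subst h1; exact absurd h2.1 hab.2
    · exact Or.inr ⟨h1, h2⟩
    · exact absurd (h1.trans h2.symm) hab.1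
    · subst h1; exact absurd h2.2 hab.2
    · subst h2; exact absurd h1.1.symm hab.2
    · subst h2; exact absurd h1.2.symm hab.2
    · exact (hclique a b ⟨h1.1, h1.2⟩ ⟨h2.1, h2.2⟩ hab).elim
  rcases key with ⟨h1', h2'⟩ | ⟨h1', h2'⟩
  · exact ⟨h1' ▸ ha.2, h2' ▸ hb.2⟩
  · exact ⟨h2' ▸ hb.2, h1' ▸ ha.2⟩

lemma pair_mem_of_reflTransGen {i : ℕ} {p q : V} (hpq : NonAdjPair G p q)
    (hclique : ∀ z z', z ∈ G.neighborSet p ∩ G.neighborSet q →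
      z' ∈ G.neighborSet p ∩ G.neighborSet q → NonAdjPair G z z' → False)
    (hprop : ∀ H' ∈ Lam G i, p ∈ H' → q ∈ H' → H' ⊆ rkBox G p q)
    {H₁ H₂ : Set V} (hr : ReflTransGen (hypStep G (Lam G i)) H₁ H₂) :
    (p ∈ H₁ ∧ q ∈ H₁) ↔ (p ∈ H₂ ∧ q ∈ H₂) := by
  induction hr with
  | refl => rfl
  | tail _ hstep ih =>
    refine ih.trans ⟨fun h => pair_propagates hpq hclique hprop hstep h,
      fun h => pair_propagates hpq hclique hprop (hypStep_symm hstep) h⟩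

/-- If some member of a class contains the pair, the whole class union is in the box. -/
lemma class_union_subset_rkBox {i : ℕ} {p q : V} (hpq : NonAdjPair G p q)
    (hclique : ∀ z z', z ∈ G.neighborSet p ∩ G.neighborSet q →
      z' ∈ G.neighborSet p ∩ G.neighborSet q → NonAdjPair G z z' → False)
    (hprop : ∀ H' ∈ Lam G i, p ∈ H' → q ∈ H' → H' ⊆ rkBox G p q)
    {H₀ M : Set V} (hM : M ∈ Lam G i) (hrM : ReflTransGen (hypStep G (Lam G i)) H₀ M)
    (hpM : p ∈ M) (hqM : q ∈ M) :
    (⋃₀ {H' | H' ∈ Lam G i ∧ ReflTransGen (hypStep G (Lam G i)) H₀ H'}) ⊆ rkBox G p q := by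
  rintro x ⟨H', ⟨hH', hrH'⟩, hx⟩
  have h₀ : p ∈ H₀ ∧ q ∈ H₀ :=
    (pair_mem_of_reflTransGen hpq hclique hprop hrM).mpr ⟨hpM, hqM⟩
  have h' : p ∈ H' ∧ q ∈ H' :=
    (pair_mem_of_reflTransGen hpq hclique hprop hrH').mp h₀
  exact hprop H' hH' h'.1 h'.2 hx

end Aux2
section Aux3

variable {V : Type*} {G : SimpleGraph V}

/-- The link condition: every non-adjacent pair in the link of `x` has rank `k`. -/
def CondX (G : SimpleGraph V) (k : ℕ) (x : V) : Prop :=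
  ∀ s₁ ∈ G.neighborSet x, ∀ s₂ ∈ G.neighborSet x, NonAdjPair G s₁ s₂ → IsRankPair G k s₁ s₂

lemma condX_clique {k : ℕ} {x t : V} (hx : CondX G k x) (hxt : NonAdjPair G x t) :
    ∀ z z', z ∈ G.neighborSet x ∩ G.neighborSet t →
      z' ∈ G.neighborSet x ∩ G.neighborSet t → NonAdjPair G z z' → False := by
  intro z z' hz hz' hzz'
  have hr : IsRankPair G k z z' := hx z hz.1 z' hz'.1 hzz'
  exact rank_common_clique k hr hz.1.symm hz'.1.symm hz.2.symm hz'.2.symm hxt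

lemma condX_not_widePre {k : ℕ} {x : V} {L : Set V} (hx : CondX G k x)
    (hL : IsWidePre G L) (hxL : x ∈ L) : False := by
  obtain ⟨A, C, ⟨hun, hadj⟩, ⟨a, ha, a', ha', hpa⟩, ⟨c, hc, c', hc', hpc⟩⟩ := hL
  have hx' : x ∈ A ∪ C := hun ▸ hxL
  rcases hx' with hxA | hxC
  · have hr : IsRankPair G k c c' :=
      hx c (hadj x hxA c hc) c' (hadj x hxA c' hc') hpc
    exact rank_common_clique k hr (hadj a ha c hc).symm (hadj a ha c' hc').symm
      (hadj a' ha' c hc).symm (hadj a' ha' c' hc').symm hpa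
  · have hr : IsRankPair G k a a' :=
      hx a (hadj a ha x hxC).symm a' (hadj a' ha' x hxC).symm hpa
    exact rank_common_clique k hr (hadj a ha c hc) (hadj a' ha' c hc)
      (hadj a ha c' hc') (hadj a' ha' c' hc') hpc

/-- The structure lemma for hyperedges containing a vertex with the link condition. -/
lemma SL_struct {m : ℕ} {x : V} (hx : CondX G (m+1) x)
    (IH : ∀ p q, IsRankPair G (m+1) p q → ∀ i ≤ m, ∀ H ∈ Lam G i,
      p ∈ H → q ∈ H → H ⊆ rkBox G p q) :
    ∀ i ≤ m, ∀ H ∈ Lam G i, x ∈ H →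
      (∃ t, NonAdjPair G x t ∧ t ∈ H ∧ H ⊆ rkBox G x t) ∨
      (∃ p q, NonAdjPair G p q ∧ G.Adj x p ∧ G.Adj x q ∧ p ∈ H ∧ q ∈ H ∧
        H ⊆ rkBox G p q) := by
  intro i
  induction i with
  | zero =>
    intro _ H hH hxH
    rcases lam_zero_cases hH with hw | hs
    · exact (condX_not_widePre hx hw hxH).elim
    · obtain ⟨A, K, hdec⟩ := hs
      obtain ⟨⟨s, t, hst, hA⟩, hKne, hKcl, hun, hadj⟩ := hdec
      have hsH : s ∈ H := hun ▸ Or.inl (hA ▸ (by simp))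
      have htH : t ∈ H := hun ▸ Or.inl (hA ▸ (by simp))
      have hsub : H ⊆ rkBox G s t :=
        stripPre_subset_rkBox ⟨A, K, ⟨s, t, hst, hA⟩, hKne, hKcl, hun, hadj⟩ hsH htH hst
      have hxmem : x ∈ A ∪ K := hun ▸ hxH
      rcases hxmem with hxA | hxK
      · rw [hA] at hxA
        rcases hxA with rfl | rfl
        · exact Or.inl ⟨t, hst, htH, hsub⟩
        · exact Or.inl ⟨s, nonAdjPair_symm hst, hsH, (rkBox_comm s x) ▸ hsub⟩
      · exact Or.inr ⟨s, t, hst, (hadj s (hA ▸ (by simp)) x hxK).symm,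
          (hadj t (hA ▸ (by simp)) x hxK).symm, hsH, htH, hsub⟩
  | succ i ih =>
    intro him H hH hxH
    have him' : i ≤ m := Nat.le_of_succ_le him
    obtain ⟨H₀, h₀, rfl⟩ := hH
    obtain ⟨M, ⟨hM, hrM⟩, hxM⟩ := hxH
    -- helper: any level-i hyperedge containing x and t (non-adjacent to x)
    -- lies in the box of (x, t)
    have hprop1 : ∀ t, NonAdjPair G x t → ∀ H' ∈ Lam G i, x ∈ H' → t ∈ H' →
        H' ⊆ rkBox G x t := by
      intro t hxt H' h' hx' ht'
      rcases ih him' H' h' hx' with ⟨t', hxt', ht'H, hsub⟩ | ⟨p, q, hpq, hxp, hxq, hpH, hqH, hsub⟩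
      · have : t ∈ rkBox G x t' := hsub ht'
        rcases this with (h | h) | h
        · exact absurd h.symm hxt.1
        · exact h ▸ hsub
        · exact absurd h.1 hxt.2
      · -- case 2 impossible : t would be adjacent to x
        exfalso
        have hxB : x ∈ rkBox G p q := hsub hx'
        have hxcore : x ∈ G.neighborSet p ∩ G.neighborSet q := by
          rcases hxB with (h | h) | h
          · exact absurd (h ▸ hxp) (G.irrefl)
          · exact absurd (h ▸ hxq) (G.irrefl)
          · exact h
        have htB : t ∈ rkBox G p q := hsub ht'
        have hrpq : IsRankPair G (m+1) p q := hx p hxp q hxq hpq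
        rcases htB with (h | h) | h
        · exact hxt.2 (h ▸ hxp)
        · exact hxt.2 (h ▸ hxq)
        · exact rank_common_clique (m+1) hrpq hxcore.1
            hxcore.2 h.1 h.2 hxt |>.elim
    rcases ih him' M hM hxM with ⟨t, hxt, htM, hMsub⟩ | ⟨p, q, hpq, hxp, hxq, hpM, hqM, hMsub⟩
    · have hclique1 := condX_clique hx hxt
      have hUsub := class_union_subset_rkBox hxt hclique1 (hprop1 t hxt) hM hrM hxM htM
      have hMU := subset_lam_succ h₀ hM hrM
      exact Or.inl ⟨t, hxt, hMU htM, hUsub⟩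
    · have hrpq : IsRankPair G (m+1) p q := hx p hxp q hxq hpq
      have hclique2 : ∀ z z', z ∈ G.neighborSet p ∩ G.neighborSet q →
          z' ∈ G.neighborSet p ∩ G.neighborSet q → NonAdjPair G z z' → False := by
        intro z z' hz hz' hzz'
        exact rank_common_clique (m+1) hrpq hz.1 hz.2 hz'.1 hz'.2 hzz'
      have hprop2 : ∀ H' ∈ Lam G i, p ∈ H' → q ∈ H' → H' ⊆ rkBox G p q :=
        fun H' h' hp' hq' => IH p q hrpq i him' H' h' hp' hq'
      have hUsub := class_union_subset_rkBox hpq hclique2 hprop2 hM hrM hpM hqM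
      have hMU := subset_lam_succ h₀ hM hrM
      exact Or.inr ⟨p, q, hpq, hxp, hxq, hMU hpM, hMU hqM, hUsub⟩

/-- Main helper: the box lemma assuming the link condition on `x`. -/
lemma lemA_main {m : ℕ} {x y : V} (hx : CondX G (m+1) x) (hnxy : NonAdjPair G x y)
    (IH : ∀ p q, IsRankPair G (m+1) p q → ∀ i ≤ m, ∀ H ∈ Lam G i,
      p ∈ H → q ∈ H → H ⊆ rkBox G p q) :
    ∀ i ≤ m+1, ∀ H ∈ Lam G i, x ∈ H → y ∈ H → H ⊆ rkBox G x y := by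
  intro i
  match i with
  | 0 =>
    intro _ H hH hxH hyH
    rcases lam_zero_cases hH with hw | hs
    · exact (condX_not_widePre hx hw hxH).elim
    · exact stripPre_subset_rkBox hs hxH hyH hnxy
  | (j+1) =>
    intro hjm H hH hxH hyH
    have hjm' : j ≤ m := Nat.le_of_succ_le_succ hjm
    obtain ⟨H₀, h₀, rfl⟩ := hH
    obtain ⟨M, ⟨hM, hrM⟩, hxM⟩ := hxH
    have hprop1 : ∀ t, NonAdjPair G x t → ∀ H' ∈ Lam G j, x ∈ H' → t ∈ H' →
        H' ⊆ rkBox G x t := by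
      intro t hxt H' h' hx' ht'
      rcases SL_struct hx IH j hjm' H' h' hx' with
        ⟨t', hxt', ht'H, hsub⟩ | ⟨p, q, hpq, hxp, hxq, hpH, hqH, hsub⟩
      · have : t ∈ rkBox G x t' := hsub ht'
        rcases this with (h | h) | h
        · exact absurd h.symm hxt.1
        · exact h ▸ hsub
        · exact absurd h.1 hxt.2
      · exfalso
        have hxB : x ∈ rkBox G p q := hsub hx'
        have hxcore : x ∈ G.neighborSet p ∩ G.neighborSet q := by
          rcases hxB with (h | h) | h
          · exact absurd (h ▸ hxp) (G.irrefl)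
          · exact absurd (h ▸ hxq) (G.irrefl)
          · exact h
        have htB : t ∈ rkBox G p q := hsub ht'
        have hrpq : IsRankPair G (m+1) p q := hx p hxp q hxq hpq
        rcases htB with (h | h) | h
        · exact hxt.2 (h ▸ hxp)
        · exact hxt.2 (h ▸ hxq)
        · exact rank_common_clique (m+1) hrpq hxcore.1 hxcore.2 h.1 h.2 hxt
    rcases SL_struct hx IH j hjm' M hM hxM with
      ⟨t, hxt, htM, hMsub⟩ | ⟨p, q, hpq, hxp, hxq, hpM, hqM, hMsub⟩
    · have hclique1 := condX_clique hx hxt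
      have hUsub := class_union_subset_rkBox hxt hclique1 (hprop1 t hxt) hM hrM hxM htM
      have hyB : y ∈ rkBox G x t := hUsub hyH
      rcases hyB with (h | h) | h
      · exact absurd h.symm hnxy.1
      · exact h ▸ hUsub
      · exact absurd h.1 hnxy.2
    · exfalso
      have hrpq : IsRankPair G (m+1) p q := hx p hxp q hxq hpq
      have hclique2 : ∀ z z', z ∈ G.neighborSet p ∩ G.neighborSet q →
          z' ∈ G.neighborSet p ∩ G.neighborSet q → NonAdjPair G z z' → False := by
        intro z z' hz hz' hzz'
        exact rank_common_clique (m+1) hrpq hz.1 hz.2 hz'.1 hz'.2 hzz'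
      have hprop2 : ∀ H' ∈ Lam G j, p ∈ H' → q ∈ H' → H' ⊆ rkBox G p q :=
        fun H' h' hp' hq' => IH p q hrpq j hjm' H' h' hp' hq'
      have hUsub := class_union_subset_rkBox hpq hclique2 hprop2 hM hrM hpM hqM
      have hxB : x ∈ rkBox G p q := hUsub (subset_lam_succ h₀ hM hrM hxM)
      have hxcore : x ∈ G.neighborSet p ∩ G.neighborSet q := by
        rcases hxB with (h | h) | h
        · exact absurd (h ▸ hxp) (G.irrefl)
        · exact absurd (h ▸ hxq) (G.irrefl)
        · exact h
      have hyB : y ∈ rkBox G p q := hUsub hyH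
      rcases hyB with (h | h) | h
      · exact hnxy.2 (h ▸ hxp)
      · exact hnxy.2 (h ▸ hxq)
      · exact rank_common_clique (m+1) hrpq hxcore.1 hxcore.2 h.1 h.2 hnxy

/-- The box lemma: a hyperedge of `Λ_i` containing a rank-`k` pair with `i < k`
lies in the box of the pair. -/
lemma rank_box_lemma : ∀ (k : ℕ) (x y : V), IsRankPair G k x y →
    ∀ i < k, ∀ H ∈ Lam G i, x ∈ H → y ∈ H → H ⊆ rkBox G x y := by
  intro k
  induction k using Nat.strong_induction_on with
  | _ k IHk =>
    match k with
    | 0 => exact fun x y h => h.elim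
    | 1 =>
      intro x y h i hi H hH hxH hyH
      interval_cases i
      rcases lam_zero_cases hH with hw | hs
      · exact (rank_not_mem_widePre h hw hxH hyH).elim
      · exact stripPre_subset_rkBox hs hxH hyH h.1
    | (m+2) =>
      intro x y h i hi H hH hxH hyH
      have IH : ∀ p q, IsRankPair G (m+1) p q → ∀ i ≤ m, ∀ H ∈ Lam G i,
          p ∈ H → q ∈ H → H ⊆ rkBox G p q := by
        intro p q hr i' hi' H' hH' hp hq
        exact IHk (m+1) (Nat.lt_succ_self _) p q hr i' (Nat.lt_succ_of_le hi') H' hH' hp hq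
      have hi' : i ≤ m + 1 := Nat.lt_succ_iff.mp hi
      rcases h.2 with hc | hc
      · exact lemA_main hc h.1 IH i hi' H hH hxH hyH
      · have := lemA_main hc (nonAdjPair_symm h.1) IH i hi' H hH hyH hxH
        exact (rkBox_comm x y) ▸ this
end Aux3
section Aux4

variable {V : Type*} {G : SimpleGraph V}

lemma exists_maximal_superset [Finite V] (P : Set V → Prop) {L : Set V} (hL : P L) :
    ∃ M, P M ∧ L ⊆ M ∧ ∀ L', P L' → M ⊆ L' → M = L' := by
  classical
  have hfin : ({M | P M ∧ L ⊆ M} : Set (Set V)).Finite := Set.toFinite _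
  obtain ⟨M, hM, hmax⟩ := Set.Finite.exists_maximalFor id _ hfin ⟨L, hL, subset_rfl⟩
  exact ⟨M, hM.1, hM.2, fun L' hL' hsub => subset_antisymm hsub (hmax ⟨hL', hM.2.trans hsub⟩ hsub)⟩

lemma widePre_subset_wide [Finite V] {L : Set V} (hL : IsWidePre G L) :
    ∃ M, IsWide G M ∧ L ⊆ M := by
  obtain ⟨M, hM, hsub, hmax⟩ := exists_maximal_superset (IsWidePre G) hL
  exact ⟨M, ⟨hM, fun L' hL' hsub' => hmax L' hL' hsub'⟩, hsub⟩

lemma stripPre_subset_lam_zero [Finite V] {L : Set V} (hL : IsStripPre G L) :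
    ∃ M ∈ Lam G 0, L ⊆ M := by
  by_cases hW : ∃ W, IsWidePre G W ∧ L ⊆ W
  · obtain ⟨W, hW, hsub⟩ := hW
    obtain ⟨M, hM, hsub'⟩ := widePre_subset_wide hW
    exact ⟨M, Or.inl hM, hsub.trans hsub'⟩
  · obtain ⟨M, hM, hsub, hmax⟩ :=
      exists_maximal_superset (fun M => IsStripPre G M ∧ L ⊆ M) ⟨hL, subset_rfl⟩
    refine ⟨M, Or.inr ⟨hM.1, ?_, ?_⟩, hsub⟩
    · intro L' hL' hsub'
      exact absurd ⟨L', hL'.1, hM.2.trans hsub'⟩ hW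
    · intro L' hL' hsub'
      exact hmax L' ⟨hL', hM.2.trans hsub'⟩ hsub'

lemma widePre_subset_lam_zero [Finite V] {L : Set V} (hL : IsWidePre G L) :
    ∃ M ∈ Lam G 0, L ⊆ M := by
  obtain ⟨M, hM, hsub⟩ := widePre_subset_wide hL
  exact ⟨M, Or.inl hM, hsub⟩

end Aux4

section Transfer

variable {V : Type*} {G : SimpleGraph V} {B : Set V}

lemma induce_adj_val {a b : ↥B} (h : (G.induce B).Adj a b) : G.Adj a.1 b.1 := h

lemma nonAdjPair_val {a b : ↥B} (h : NonAdjPair (G.induce B) a b) :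
    NonAdjPair G a.1 b.1 :=
  ⟨fun hab => h.1 (Subtype.coe_injective hab), fun hab => h.2 hab⟩

lemma widePre_val {L : Set ↥B} (h : IsWidePre (G.induce B) L) :
    IsWidePre G (Subtype.val '' L) := by
  obtain ⟨A, C, ⟨hun, hadj⟩, ⟨a, ha, a', ha', hpa⟩, ⟨c, hc, c', hc', hpc⟩⟩ := h
  refine ⟨Subtype.val '' A, Subtype.val '' C, ⟨?_, ?_⟩, ?_, ?_⟩
  · rw [← Set.image_union, hun]
  · rintro _ ⟨a₀, ha₀, rfl⟩ _ ⟨c₀, hc₀, rfl⟩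
    exact hadj a₀ ha₀ c₀ hc₀
  · exact ⟨a.1, ⟨a, ha, rfl⟩, a'.1, ⟨a', ha', rfl⟩, nonAdjPair_val hpa⟩
  · exact ⟨c.1, ⟨c, hc, rfl⟩, c'.1, ⟨c', hc', rfl⟩, nonAdjPair_val hpc⟩

lemma stripPre_val {L : Set ↥B} (h : IsStripPre (G.induce B) L) :
    IsStripPre G (Subtype.val '' L) := by
  obtain ⟨A, K, ⟨s, t, hst, hA⟩, hKne, hKcl, hun, hadj⟩ := h
  refine ⟨Subtype.val '' A, Subtype.val '' K, ⟨s.1, t.1, nonAdjPair_val hst, ?_⟩,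
    hKne.image _, ?_, ?_, ?_⟩
  · rw [hA, Set.image_pair]
  · rintro _ ⟨k₀, hk₀, rfl⟩ _ ⟨k₁, hk₁, rfl⟩ hne
    exact hKcl hk₀ hk₁ (fun hh => hne (hh ▸ rfl))
  · rw [← Set.image_union, hun]
  · rintro _ ⟨a₀, ha₀, rfl⟩ _ ⟨k₀, hk₀, rfl⟩
    exact hadj a₀ ha₀ k₀ hk₀

/-- Hyperedges of `Λ_i` of the induced subgraph embed into hyperedges of `Λ_i` of `G`. -/
lemma lam_lift [Finite V] : ∀ (i : ℕ) (H : Set ↥B), H ∈ Lam (G.induce B) i →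
    ∃ H' ∈ Lam G i, Subtype.val '' H ⊆ H' := by
  intro i
  induction i with
  | zero =>
    intro H hH
    rcases lam_zero_cases hH with hw | hs
    · exact widePre_subset_lam_zero (widePre_val hw)
    · exact stripPre_subset_lam_zero (stripPre_val hs)
  | succ i ih =>
    classical
    intro H hH
    obtain ⟨h₀, h₀mem, rfl⟩ := hH
    -- choose a lift for every hyperedge of level i
    have hch : ∀ h : Set ↥B, ∃ H' : Set V,
        h ∈ Lam (G.induce B) i → H' ∈ Lam G i ∧ Subtype.val '' h ⊆ H' := by
      intro h
      by_cases hmem : h ∈ Lam (G.induce B) i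
      · obtain ⟨H', hH', hsub⟩ := ih h hmem
        exact ⟨H', fun _ => ⟨hH', hsub⟩⟩
      · exact ⟨∅, fun hc => absurd hc hmem⟩
    choose F hF using hch
    have hstep : ∀ h₁ h₂ : Set ↥B,
        hypStep (G.induce B) (Lam (G.induce B) i) h₁ h₂ →
        hypStep G (Lam G i) (F h₁) (F h₂) := by
      intro h₁ h₂ ⟨hm₁, hm₂, s, t, hst, hs, ht⟩
      refine ⟨(hF h₁ hm₁).1, (hF h₂ hm₂).1, s.1, t.1, nonAdjPair_val hst, ?_, ?_⟩
      · exact ⟨(hF h₁ hm₁).2 ⟨s, hs.1, rfl⟩, (hF h₂ hm₂).2 ⟨s, hs.2, rfl⟩⟩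
      · exact ⟨(hF h₁ hm₁).2 ⟨t, ht.1, rfl⟩, (hF h₂ hm₂).2 ⟨t, ht.2, rfl⟩⟩
    refine ⟨⋃₀ {H' | H' ∈ Lam G i ∧ ReflTransGen (hypStep G (Lam G i)) (F h₀) H'},
      ⟨F h₀, (hF h₀ h₀mem).1, rfl⟩, ?_⟩
    rintro _ ⟨a, ⟨h', ⟨h'mem, hrel⟩, ha⟩, rfl⟩
    have hrel' : ReflTransGen (hypStep G (Lam G i)) (F h₀) (F h') :=
      ReflTransGen.lift F hstep _ _ hrel
    exact ⟨F h', ⟨(hF h' h'mem).1, hrel'⟩, (hF h' h'mem).2 ⟨a, ha, rfl⟩⟩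

end Transfer

/-- under the hypotheses of Theorem 7.4 (two strip vertices `u, v`
attached to a graph `B` of hypergraph index `n - 1`, with the rank `n` pair
conditions), `Γ` has hypergraph index exactly `n`. -/
theorem counterexample_graph_hypergraph_index [Finite V] (G : SimpleGraph V)
    (n : ℕ) (hn : 1 < n) (B : Set V) (u v : V) (huv : u ≠ v)
    (hB : Bᶜ = {u, v})
    (hBidx : HasHypIndex (G.induce B) (n - 1))
    (hu : ∃ b₁ b₂, b₁ ∈ B ∧ b₂ ∈ B ∧ NonAdjPair G b₁ b₂ ∧
      G.neighborSet u = {b₁, b₂})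
    (hv : ∃ b₁ b₂, b₁ ∈ B ∧ b₂ ∈ B ∧ NonAdjPair G b₁ b₂ ∧
      G.neighborSet v = {b₁, b₂})
    (hru : ∀ s, s ∉ insert u (G.neighborSet u) → IsRankPair G n u s)
    (hrv : ∀ s, s ∉ insert v (G.neighborSet v) → IsRankPair G n v s) :
    HasHypIndex G n := by
  classical
  obtain ⟨b₁, b₂, hb₁B, hb₂B, hbnp, hNu⟩ := hu
  obtain ⟨c₁, c₂, hc₁B, hc₂B, hcnp, hNv⟩ := hv
  have huB : u ∉ B := by
    have : u ∈ Bᶜ := hB.symm ▸ (Set.mem_insert u {v})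
    exact this
  have hvB : v ∉ B := by
    have : v ∈ Bᶜ := hB.symm ▸ (Set.mem_insert_of_mem u rfl)
    exact this
  have htrich : ∀ x : V, x ∈ B ∨ x = u ∨ x = v := by
    intro x
    by_cases hx : x ∈ B
    · exact Or.inl hx
    · have : x ∈ Bᶜ := hx
      rw [hB] at this
      rcases this with h | h
      · exact Or.inr (Or.inl h)
      · exact Or.inr (Or.inr h)
  have hadj_ub₁ : G.Adj u b₁ := by
    have : b₁ ∈ G.neighborSet u := hNu ▸ (Set.mem_insert b₁ {b₂})
    exact this
  have hadj_ub₂ : G.Adj u b₂ := by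
    have : b₂ ∈ G.neighborSet u := hNu ▸ (Set.mem_insert_of_mem b₁ rfl)
    exact this
  have hadj_vc₁ : G.Adj v c₁ := by
    have : c₁ ∈ G.neighborSet v := hNv ▸ (Set.mem_insert c₁ {c₂})
    exact this
  have hadj_vc₂ : G.Adj v c₂ := by
    have : c₂ ∈ G.neighborSet v := hNv ▸ (Set.mem_insert_of_mem c₁ rfl)
    exact this
  obtain ⟨⟨LB, hLB⟩, ⟨hBF, hBFmem, hBFfull⟩, _⟩ := hBidx
  -- Part 1 : Γ has a wide subgraph
  obtain ⟨W, hWwide, _⟩ := widePre_subset_wide (widePre_val (G := G) hLB.1)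
  refine ⟨⟨W, hWwide⟩, ?_, ?_⟩
  · -- Part 2 : a hyperedge of Λ_n covers Γ
    obtain ⟨HB, hHBmem, hHBsub⟩ := lam_lift (n-1) hBF hBFmem
    have hBsubHB : B ⊆ HB := by
      intro x hx
      exact hHBsub ⟨⟨x, hx⟩, hBFfull (Set.mem_univ _), rfl⟩
    have hSu : IsStripPre G ({b₁, b₂} ∪ {u}) := by
      refine ⟨{b₁, b₂}, {u}, ⟨b₁, b₂, hbnp, rfl⟩, ⟨u, rfl⟩, ?_, rfl, ?_⟩
      · simp [SimpleGraph.IsClique]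
      · rintro a ha k rfl
        rcases ha with rfl | rfl
        · exact hadj_ub₁.symm
        · exact hadj_ub₂.symm
    have hSv : IsStripPre G ({c₁, c₂} ∪ {v}) := by
      refine ⟨{c₁, c₂}, {v}, ⟨c₁, c₂, hcnp, rfl⟩, ⟨v, rfl⟩, ?_, rfl, ?_⟩
      · simp [SimpleGraph.IsClique]
      · rintro a ha k rfl
        rcases ha with rfl | rfl
        · exact hadj_vc₁.symm
        · exact hadj_vc₂.symm
    obtain ⟨Eu, hEu0, hEusub⟩ := stripPre_subset_lam_zero hSu
    obtain ⟨Ev, hEv0, hEvsub⟩ := stripPre_subset_lam_zero hSv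
    obtain ⟨Eu', hEu', hEusub'⟩ := exists_lam_le_superset (Nat.zero_le (n-1)) hEu0
    obtain ⟨Ev', hEv', hEvsub'⟩ := exists_lam_le_superset (Nat.zero_le (n-1)) hEv0
    have hEuU : ({b₁, b₂} ∪ {u} : Set V) ⊆ Eu' := hEusub.trans hEusub'
    have hEvU : ({c₁, c₂} ∪ {v} : Set V) ⊆ Ev' := hEvsub.trans hEvsub'
    have hn1 : n - 1 + 1 = n := by omega
    refine ⟨⋃₀ {H' | H' ∈ Lam G (n-1) ∧
        ReflTransGen (hypStep G (Lam G (n-1))) HB H'}, ?_, ?_⟩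
    · rw [← hn1]
      exact lam_succ_of_mem hHBmem
    · intro x _
      have hstepu : hypStep G (Lam G (n-1)) HB Eu' := by
        refine ⟨hHBmem, hEu', b₁, b₂, hbnp, ⟨hBsubHB hb₁B, hEuU (Or.inl (by simp))⟩,
          ⟨hBsubHB hb₂B, hEuU (Or.inl (by simp))⟩⟩
      have hstepv : hypStep G (Lam G (n-1)) HB Ev' := by
        refine ⟨hHBmem, hEv', c₁, c₂, hcnp, ⟨hBsubHB hc₁B, hEvU (Or.inl (by simp))⟩,
          ⟨hBsubHB hc₂B, hEvU (Or.inl (by simp))⟩⟩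
      rcases htrich x with hx | rfl | rfl
      · exact subset_lam_succ hHBmem hHBmem ReflTransGen.refl (hBsubHB hx)
      · exact subset_lam_succ hHBmem hEu' (ReflTransGen.single hstepu)
          (hEuU (Or.inr rfl))
      · exact subset_lam_succ hHBmem hEv' (ReflTransGen.single hstepv)
          (hEvU (Or.inr rfl))
  · -- Part 3 : no hyperedge of Λ_{h'} with h' < n covers Γ
    -- first find a vertex s of B different from b₁ and b₂
    obtain ⟨A, C, ⟨hun, hadj⟩, ⟨a, ha, a', ha', hpa⟩, ⟨c, hc, c', hc', hpc⟩⟩ := hLB.1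
    have haa' : (a : V) ≠ (a' : V) := Subtype.coe_injective.ne hpa.1
    have hac : (a : V) ≠ (c : V) :=
      Subtype.coe_injective.ne (hadj a ha c hc).ne
    have ha'c : (a' : V) ≠ (c : V) :=
      Subtype.coe_injective.ne (hadj a' ha' c hc).ne
    have hs : ∃ s, s ∈ B ∧ s ≠ b₁ ∧ s ≠ b₂ := by
      by_cases e1 : (a : V) = b₁ ∨ (a : V) = b₂
      · by_cases e2 : (a' : V) = b₁ ∨ (a' : V) = b₂
        · rcases e1 with h1 | h1 <;> rcases e2 with h2 | h2
          · exact absurd (h1.trans h2.symm) haa'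
          · exact ⟨c, c.2, fun h => hac (h1.trans h.symm), fun h => ha'c (h2.trans h.symm)⟩
          · exact ⟨c, c.2, fun h => ha'c (h2.trans h.symm), fun h => hac (h1.trans h.symm)⟩
          · exact absurd (h1.trans h2.symm) haa'
        · push_neg at e2
          exact ⟨a', a'.2, e2.1, e2.2⟩
      · push_neg at e1
        exact ⟨a, a.2, e1.1, e1.2⟩
    obtain ⟨s, hsB, hsb₁, hsb₂⟩ := hs
    have hsu : s ≠ u := fun h => huB (h ▸ hsB)
    have hsv : s ≠ v := fun h => hvB (h ▸ hsB)
    have hsnot : s ∉ insert u (G.neighborSet u) := by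
      rw [hNu]
      intro h
      rcases h with h | h | h
      · exact hsu h
      · exact hsb₁ h
      · exact hsb₂ h
    have hrs : IsRankPair G n u s := hru s hsnot
    rintro h' hh' ⟨H, hHmem, hfull⟩
    have hsub := rank_box_lemma n u s hrs h' hh' H hHmem
      (hfull (Set.mem_univ u)) (hfull (Set.mem_univ s))
    have hvbox : v ∈ rkBox G u s := hsub (hfull (Set.mem_univ v))
    rcases hvbox with (h | h) | h
    · exact huv h.symm
    · exact hvB (h ▸ hsB)
    · have : v ∈ G.neighborSet u := h.1
      rw [hNu] at this
      rcases this with h2 | h2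
      · exact hvB (h2 ▸ hb₁B)
      · exact hvB (h2 ▸ hb₂B)
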